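/- Let m ≥ 1, n = 2^m, θ ∈ ℝ and ν > 0. Let A_1, …, A_n be independent real random variables, each distributed N(θ, ν/2). For t = 1, …, m let J_t be the set of pairs (j,k) with 1 ≤ j < k ≤ n, j ≡ 1 (mod 2^t) and k − j = 2^{t−1}. Apply successively, for t = 1, …, m and for each (j,k) ∈ J_t, the update (A_j, A_k) ↦ (A_j cos(π/4) + A_k sin(π/4), −A_j sin(π/4) + A_k cos(π/4)). Then the resulting random variables A'_1, …, A'_n are independent, with A'_1 distributed N(√n · θ, ν/2) and A'_j distributed N(0, ν/2) for every j = 2, …, n. -/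

import Mathlib

open MeasureTheory ProbabilityTheory Real

open scoped ENNReal NNReal

/-- The rotation `g_τ^{(j,k)}` acting on a vector of amplitudes (0-based indices):
`(v j, v k) ↦ (v j cos τ + v k sin τ, -v j sin τ + v k cos τ)`. -/
noncomputable def rotStep (τ : ℝ) (j k : ℕ) (v : ℕ → ℝ) : ℕ → ℝ := fun i =>
  if i = j then v j * Real.cos τ + v k * Real.sin τ
  else if i = k then -v j * Real.sin τ + v k * Real.cos τ
  else v i

/-- The transformation `G₂` on `n = 2^m` amplitudes: for `t = 1, …, m` (here `t = t'+1` with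
`t'` ranging over `List.range m`) and for each pair `(j, k)` with (1-based) `j ≡ 1 (mod 2^t)`,
`k - j = 2^{t-1}` — i.e. 0-based `j = 2^t l`, `k = 2^t l + 2^{t-1}` — apply `g_{π/4}^{(j,k)}`. -/
noncomputable def G2 (m : ℕ) (v : ℕ → ℝ) : ℕ → ℝ :=
  (List.range m).foldl
    (fun (w : ℕ → ℝ) (t : ℕ) =>
      (List.range (2 ^ (m - (t + 1)))).foldl
        (fun (u : ℕ → ℝ) (l : ℕ) =>
          rotStep (Real.pi / 4) (2 ^ (t + 1) * l) (2 ^ (t + 1) * l + 2 ^ t) u) w) v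


section Aux


variable {c s : ℝ}

/-- rotation as a measurable equiv of ℝ × ℝ -/
noncomputable def rotMEquiv (c s : ℝ) (h : c^2 + s^2 = 1) : (ℝ × ℝ) ≃ᵐ (ℝ × ℝ) where
  toFun := fun p => (p.1 * c + p.2 * s, -p.1 * s + p.2 * c)
  invFun := fun p => (p.1 * c - p.2 * s, p.1 * s + p.2 * c)
  left_inv := by
    intro p
    refine Prod.ext ?_ ?_ <;> dsimp
    · linear_combination p.1 * h
    · linear_combination p.2 * h
  right_inv := by
    intro p
    refine Prod.ext ?_ ?_ <;> dsimp
    · linear_combination p.1 * h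
    · linear_combination p.2 * h
  measurable_toFun := by dsimp; fun_prop
  measurable_invFun := by dsimp; fun_prop

lemma volume_map_rot (h : c^2 + s^2 = 1) :
    volume.map (rotMEquiv c s h) = volume := by
  have hL : (⇑(Matrix.toLin (Module.Basis.finTwoProd ℝ) (Module.Basis.finTwoProd ℝ) !![c, s; -s, c])
      : ℝ × ℝ → ℝ × ℝ) = ⇑(rotMEquiv c s h) := by
    funext p
    rw [Matrix.toLin_finTwoProd_apply]
    have hr : (⇑(rotMEquiv c s h)) p = (p.1 * c + p.2 * s, -p.1 * s + p.2 * c) := rfl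
    rw [hr]
    exact Prod.ext (by ring) (by ring)
  have hdet : LinearMap.det (Matrix.toLin (Module.Basis.finTwoProd ℝ) (Module.Basis.finTwoProd ℝ)
      !![c, s; -s, c]) = 1 := by
    rw [LinearMap.det_toLin, Matrix.det_fin_two_of]
    nlinarith [h]
  have := MeasureTheory.Measure.map_linearMap_addHaar_eq_smul_addHaar
    (μ := (volume : Measure (ℝ × ℝ)))
    (f := Matrix.toLin (Module.Basis.finTwoProd ℝ) (Module.Basis.finTwoProd ℝ) !![c, s; -s, c])
    (by rw [hdet]; norm_num)
  rw [hL, hdet] at this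
  simpa using this

lemma map_withDensity_equiv {α β : Type*} [MeasurableSpace α] [MeasurableSpace β]
    (e : α ≃ᵐ β) (μ : Measure α) (f : β → ℝ≥0∞) (hf : Measurable f) :
    (μ.withDensity (f ∘ e)).map e = (μ.map e).withDensity f := by
  ext s hs
  rw [Measure.map_apply e.measurable hs, withDensity_apply _ (e.measurable hs),
    withDensity_apply _ hs, setLIntegral_map hs hf e.measurable]
  rfl

lemma gaussian_prod_withDensity (μ₁ μ₂ : ℝ) (v : ℝ≥0) (hv : v ≠ 0) :
    (gaussianReal μ₁ v).prod (gaussianReal μ₂ v) =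
      (volume.prod volume).withDensity
        (fun p => gaussianPDF μ₁ v p.1 * gaussianPDF μ₂ v p.2) := by
  have h1 := gaussianReal_of_var_ne_zero μ₁ hv
  have h2 := gaussianReal_of_var_ne_zero μ₂ hv
  have hm1 : Measurable (gaussianPDF μ₁ v) := measurable_gaussianPDF μ₁ v
  have hm2 : Measurable (gaussianPDF μ₂ v) := measurable_gaussianPDF μ₂ v
  have : SigmaFinite (gaussianReal μ₁ v) := inferInstance
  have : SigmaFinite (gaussianReal μ₂ v) := inferInstance
  refine Measure.prod_eq (μ := gaussianReal μ₁ v) (ν := gaussianReal μ₂ v) fun A B hA hB => ?_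
  rw [withDensity_apply _ (hA.prod hB), ← Measure.prod_restrict,
    lintegral_prod_mul hm1.aemeasurable hm2.aemeasurable,
    h1, h2, withDensity_apply _ hA, withDensity_apply _ hB]

lemma gaussianPDFReal_rot (μ₁ μ₂ : ℝ) (v : ℝ≥0) (c s x y : ℝ)
    (h : c^2 + s^2 = 1) :
    gaussianPDFReal (μ₁*c+μ₂*s) v (x*c+y*s) * gaussianPDFReal (-μ₁*s+μ₂*c) v (-x*s+y*c)
      = gaussianPDFReal μ₁ v x * gaussianPDFReal μ₂ v y := by
  unfold gaussianPDFReal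
  have h1 : -(x*c+y*s-(μ₁*c+μ₂*s))^2/(2*(v:ℝ)) + -(-x*s+y*c-(-μ₁*s+μ₂*c))^2/(2*(v:ℝ))
      = -(x-μ₁)^2/(2*(v:ℝ)) + -(y-μ₂)^2/(2*(v:ℝ)) := by
    rw [← add_div, ← add_div]
    congr 1
    linear_combination (-(x-μ₁)^2-(y-μ₂)^2) * h
  rw [mul_mul_mul_comm, ← Real.exp_add, h1, Real.exp_add, ← mul_mul_mul_comm]

lemma rot_map_gaussian (μ₁ μ₂ : ℝ) {v : ℝ≥0} (hv : v ≠ 0) (c s : ℝ) (h : c^2+s^2=1) :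
    ((gaussianReal μ₁ v).prod (gaussianReal μ₂ v)).map (rotMEquiv c s h) =
      (gaussianReal (μ₁*c+μ₂*s) v).prod (gaussianReal (-μ₁*s+μ₂*c) v) := by
  have hG : Measurable (fun p : ℝ×ℝ =>
      gaussianPDF (μ₁*c+μ₂*s) v p.1 * gaussianPDF (-μ₁*s+μ₂*c) v p.2) :=
    ((measurable_gaussianPDF _ v).comp measurable_fst).mul
      ((measurable_gaussianPDF _ v).comp measurable_snd)
  have hFG : (fun p : ℝ×ℝ => gaussianPDF μ₁ v p.1 * gaussianPDF μ₂ v p.2)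
      = (fun p : ℝ×ℝ => gaussianPDF (μ₁*c+μ₂*s) v p.1 * gaussianPDF (-μ₁*s+μ₂*c) v p.2)
        ∘ (rotMEquiv c s h) := by
    funext p
    show gaussianPDF μ₁ v p.1 * gaussianPDF μ₂ v p.2
      = gaussianPDF (μ₁*c+μ₂*s) v (p.1*c+p.2*s) * gaussianPDF (-μ₁*s+μ₂*c) v (-p.1*s+p.2*c)
    unfold gaussianPDF
    rw [← ENNReal.ofReal_mul (gaussianPDFReal_nonneg _ _ _),
      ← ENNReal.ofReal_mul (gaussianPDFReal_nonneg _ _ _),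
      gaussianPDFReal_rot μ₁ μ₂ v c s p.1 p.2 h]
  rw [gaussian_prod_withDensity _ _ _ hv, gaussian_prod_withDensity _ _ _ hv, hFG,
    ← Measure.volume_eq_prod, map_withDensity_equiv _ _ _ hG, volume_map_rot h]

variable {Ω : Type} [MeasureSpace Ω] [IsProbabilityMeasure (ℙ : Measure Ω)]

lemma pair_rot_law {X Y : Ω → ℝ} (hX : Measurable X) (hY : Measurable Y)
    (hXY : IndepFun X Y ℙ) {μ₁ μ₂ : ℝ} {v : ℝ≥0} (hv : v ≠ 0)
    (hlX : (ℙ : Measure Ω).map X = gaussianReal μ₁ v)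
    (hlY : (ℙ : Measure Ω).map Y = gaussianReal μ₂ v)
    (c s : ℝ) (h : c^2+s^2=1) :
    (ℙ : Measure Ω).map (fun ω => (X ω * c + Y ω * s, -X ω * s + Y ω * c))
      = (gaussianReal (μ₁*c+μ₂*s) v).prod (gaussianReal (-μ₁*s+μ₂*c) v) := by
  have hpair : (ℙ : Measure Ω).map (fun ω => (X ω, Y ω)) = ((ℙ : Measure Ω).map X).prod ((ℙ : Measure Ω).map Y) :=
    (indepFun_iff_map_prod_eq_prod_map_map hX.aemeasurable hY.aemeasurable).1 hXY
  have hcomp : (fun ω => (X ω * c + Y ω * s, -X ω * s + Y ω * c))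
      = (rotMEquiv c s h) ∘ (fun ω => (X ω, Y ω)) := rfl
  rw [hcomp, ← Measure.map_map (rotMEquiv c s h).measurable (hX.prodMk hY), hpair, hlX, hlY,
    rot_map_gaussian μ₁ μ₂ hv c s h]

lemma pair_rot_fst_law {X Y : Ω → ℝ} (hX : Measurable X) (hY : Measurable Y)
    (hXY : IndepFun X Y ℙ) {μ₁ μ₂ : ℝ} {v : ℝ≥0} (hv : v ≠ 0)
    (hlX : (ℙ : Measure Ω).map X = gaussianReal μ₁ v)
    (hlY : (ℙ : Measure Ω).map Y = gaussianReal μ₂ v)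
    (c s : ℝ) (h : c^2+s^2=1) :
    (ℙ : Measure Ω).map (fun ω => X ω * c + Y ω * s) = gaussianReal (μ₁*c+μ₂*s) v := by
  have : (fun ω => X ω * c + Y ω * s)
      = Prod.fst ∘ (fun ω => (X ω * c + Y ω * s, -X ω * s + Y ω * c)) := rfl
  rw [this, ← Measure.map_map (f := fun ω => (X ω * c + Y ω * s, -X ω * s + Y ω * c)) measurable_fst (((hX.mul_const c).add (hY.mul_const s)).prodMk
    (((hX.neg.mul_const s)).add (hY.mul_const c))),
    pair_rot_law hX hY hXY hv hlX hlY c s h]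
  simp

lemma pair_rot_snd_law {X Y : Ω → ℝ} (hX : Measurable X) (hY : Measurable Y)
    (hXY : IndepFun X Y ℙ) {μ₁ μ₂ : ℝ} {v : ℝ≥0} (hv : v ≠ 0)
    (hlX : (ℙ : Measure Ω).map X = gaussianReal μ₁ v)
    (hlY : (ℙ : Measure Ω).map Y = gaussianReal μ₂ v)
    (c s : ℝ) (h : c^2+s^2=1) :
    (ℙ : Measure Ω).map (fun ω => -X ω * s + Y ω * c) = gaussianReal (-μ₁*s+μ₂*c) v := by
  have : (fun ω => -X ω * s + Y ω * c)
      = Prod.snd ∘ (fun ω => (X ω * c + Y ω * s, -X ω * s + Y ω * c)) := rfl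
  rw [this, ← Measure.map_map (f := fun ω => (X ω * c + Y ω * s, -X ω * s + Y ω * c)) measurable_snd (((hX.mul_const c).add (hY.mul_const s)).prodMk
    (((hX.neg.mul_const s)).add (hY.mul_const c))),
    pair_rot_law hX hY hXY hv hlX hlY c s h]
  simp

lemma pair_rot_indep {X Y : Ω → ℝ} (hX : Measurable X) (hY : Measurable Y)
    (hXY : IndepFun X Y ℙ) {μ₁ μ₂ : ℝ} {v : ℝ≥0} (hv : v ≠ 0)
    (hlX : (ℙ : Measure Ω).map X = gaussianReal μ₁ v)
    (hlY : (ℙ : Measure Ω).map Y = gaussianReal μ₂ v)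
    (c s : ℝ) (h : c^2+s^2=1) :
    IndepFun (fun ω => X ω * c + Y ω * s) (fun ω => -X ω * s + Y ω * c) ℙ := by
  have hU : Measurable (fun ω => X ω * c + Y ω * s) := (hX.mul_const c).add (hY.mul_const s)
  have hV : Measurable (fun ω => -X ω * s + Y ω * c) := (hX.neg.mul_const s).add (hY.mul_const c)
  rw [indepFun_iff_map_prod_eq_prod_map_map hU.aemeasurable hV.aemeasurable]
  rw [pair_rot_law hX hY hXY hv hlX hlY c s h,
    pair_rot_fst_law hX hY hXY hv hlX hlY c s h,
    pair_rot_snd_law hX hY hXY hv hlX hlY c s h]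



lemma regroup {ι : Type*} [DecidableEq ι] (f g : ι → Ω → ℝ)
    (hf : ∀ i, Measurable (f i))
    (hindep : iIndepFun f ℙ)
    (j k : ι) (hjk : j ≠ k) (φ ψ : ℝ × ℝ → ℝ) (hφ : Measurable φ) (hψ : Measurable ψ)
    (hgj : g j = fun ω => φ (f j ω, f k ω))
    (hgk : g k = fun ω => ψ (f j ω, f k ω))
    (hgo : ∀ i, i ≠ j → i ≠ k → g i = f i)
    (hpair : IndepFun (fun ω => φ (f j ω, f k ω)) (fun ω => ψ (f j ω, f k ω)) ℙ) :
    iIndepFun g ℙ := by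
  classical
  rw [iIndepFun_iff_measure_inter_preimage_eq_mul]
  intro S sets hsets
  set P : Ω → ℝ × ℝ := fun ω => (f j ω, f k ω) with hP
  set E : Set (ℝ × ℝ) :=
    (if j ∈ S then φ ⁻¹' (sets j) else Set.univ) ∩
    (if k ∈ S then ψ ⁻¹' (sets k) else Set.univ) with hE
  set S' : Finset ι := S \ {j, k} with hS'
  have hS'sub : ∀ i ∈ S', i ∈ S ∧ i ≠ j ∧ i ≠ k := by
    intro i hi
    simp only [hS', Finset.mem_sdiff, Finset.mem_insert, Finset.mem_singleton] at hi
    exact ⟨hi.1, fun h => hi.2 (Or.inl h), fun h => hi.2 (Or.inr h)⟩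
  -- decomposition of the event
  have hdecomp : (⋂ i ∈ S, g i ⁻¹' sets i) = P ⁻¹' E ∩ ⋂ i ∈ S', f i ⁻¹' sets i := by
    ext ω
    simp only [Set.mem_iInter, Set.mem_inter_iff, Set.mem_preimage, hE]
    constructor
    · intro hω
      refine ⟨⟨?_, ?_⟩, ?_⟩
      · split_ifs with hj
        · have := hω j hj; rwa [hgj] at this
        · trivial
      · split_ifs with hk
        · have := hω k hk; rwa [hgk] at this
        · trivial
      · intro i hi
        obtain ⟨hiS, hij, hik⟩ := hS'sub i hi
        have := hω i hiS
        rwa [hgo i hij hik] at this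
    · rintro ⟨⟨h1, h2⟩, h3⟩ i hi
      by_cases hij : i = j
      · subst hij; rw [if_pos hi] at h1; rw [hgj]; exact h1
      by_cases hik : i = k
      · subst hik; rw [if_pos hi] at h2; rw [hgk]; exact h2
      · have hiS' : i ∈ S' := by
          simp only [hS', Finset.mem_sdiff, Finset.mem_insert, Finset.mem_singleton]
          exact ⟨hi, fun h => h.elim hij hik⟩
        rw [hgo i hij hik]
        exact h3 i hiS'
  have hEmeas : MeasurableSet E := by
    refine MeasurableSet.inter ?_ ?_ <;> split_ifs with h
    · exact hφ (hsets j h)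
    · exact MeasurableSet.univ
    · exact hψ (hsets k h)
    · exact MeasurableSet.univ
  -- the rest-tuple
  have hT : (⋂ i ∈ S', f i ⁻¹' sets i)
      = (fun ω (i : S') => f i ω) ⁻¹' (Set.univ.pi fun i : S' => sets i) := by
    ext ω
    simp [Set.mem_pi]
  -- independence of P from the rest
  have hdisj : Disjoint ({j, k} : Finset ι) S' := by
    simp only [hS']
    exact Finset.disjoint_sdiff
  have hind2 := hindep.indepFun_finset {j, k} S' hdisj hf
  have hjm : j ∈ ({j, k} : Finset ι) := Finset.mem_insert_self _ _
  have hkm : k ∈ ({j, k} : Finset ι) := Finset.mem_insert_of_mem (Finset.mem_singleton_self _)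
  have hPcomp : P = (fun (v : ({j,k} : Finset ι) → ℝ) => (v ⟨j, hjm⟩, v ⟨k, hkm⟩))
      ∘ (fun ω (i : ({j,k} : Finset ι)) => f i ω) := rfl
  have hindPT : IndepFun P (fun ω (i : S') => f i ω) ℙ := by
    rw [hPcomp]
    exact hind2.comp (by fun_prop) measurable_id
  have key : ℙ (P ⁻¹' E ∩ ⋂ i ∈ S', f i ⁻¹' sets i)
      = ℙ (P ⁻¹' E) * ℙ (⋂ i ∈ S', f i ⁻¹' sets i) := by
    rw [hT]
    exact (indepFun_iff_measure_inter_preimage_eq_mul.1 hindPT) E _ hEmeas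
      (MeasurableSet.univ_pi fun i => hsets i (hS'sub i i.2).1)
  have hTprod : ℙ (⋂ i ∈ S', f i ⁻¹' sets i) = ∏ i ∈ S', ℙ (f i ⁻¹' sets i) :=
    hindep.measure_inter_preimage_eq_mul S' (fun i hi => hsets i (hS'sub i hi).1)
  have hPE : ℙ (P ⁻¹' E) = ∏ i ∈ S ∩ {j, k}, ℙ (g i ⁻¹' sets i) := by
    by_cases hj : j ∈ S <;> by_cases hk : k ∈ S
    · have hint : S ∩ {j, k} = {j, k} :=
        Finset.inter_eq_right.2 (by simp [Finset.insert_subset_iff, hj, hk])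
      rw [hint, Finset.prod_pair hjk, hE, if_pos hj, if_pos hk]
      have : P ⁻¹' (φ ⁻¹' sets j ∩ ψ ⁻¹' sets k)
          = (fun ω => φ (f j ω, f k ω)) ⁻¹' sets j ∩ (fun ω => ψ (f j ω, f k ω)) ⁻¹' sets k := rfl
      rw [this, hpair.measure_inter_preimage_eq_mul _ _ (hsets j hj) (hsets k hk), hgj, hgk]
    · have hint : S ∩ {j, k} = {j} := by
        ext i
        simp only [Finset.mem_inter, Finset.mem_insert, Finset.mem_singleton]
        constructor
        · rintro ⟨hiS, hi | hi⟩
          · exact hi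
          · exact absurd (hi ▸ hiS) hk
        · rintro rfl; exact ⟨hj, Or.inl rfl⟩
      rw [hint, Finset.prod_singleton, hE, if_pos hj, if_neg hk, Set.inter_univ, hgj]
      rfl
    · have hint : S ∩ {j, k} = {k} := by
        ext i
        simp only [Finset.mem_inter, Finset.mem_insert, Finset.mem_singleton]
        constructor
        · rintro ⟨hiS, hi | hi⟩
          · exact absurd (hi ▸ hiS) hj
          · exact hi
        · rintro rfl; exact ⟨hk, Or.inr rfl⟩
      rw [hint, Finset.prod_singleton, hE, if_neg hj, if_pos hk, Set.univ_inter, hgk]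
      rfl
    · have hint : S ∩ {j, k} = ∅ := by
        ext i
        simp only [Finset.mem_inter, Finset.mem_insert, Finset.mem_singleton,
          Finset.notMem_empty, iff_false, not_and]
        rintro hiS (rfl | rfl) <;> [exact hj hiS; exact hk hiS]
      rw [hint, Finset.prod_empty, hE, if_neg hj, if_neg hk, Set.univ_inter, Set.preimage_univ]
      exact measure_univ
  have hsplit : ∏ i ∈ S, ℙ (g i ⁻¹' sets i)
      = (∏ i ∈ S ∩ {j, k}, ℙ (g i ⁻¹' sets i)) * ∏ i ∈ S', ℙ (g i ⁻¹' sets i) := by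
    rw [hS']
    exact (Finset.prod_inter_mul_prod_diff S {j,k} _).symm
  rw [hdecomp, key, hTprod, hPE, hsplit]
  congr 1
  exact Finset.prod_congr rfl fun i hi => by rw [hgo i (hS'sub i hi).2.1 (hS'sub i hi).2.2]

section RV
variable {Ω : Type} [MeasureSpace Ω] [IsProbabilityMeasure (ℙ : Measure Ω)]

noncomputable def rotStepRV (τ : ℝ) (j k : ℕ) (B : ℕ → Ω → ℝ) : ℕ → Ω → ℝ :=
  fun i ω => rotStep τ j k (fun x => B x ω) i

def Good (n : ℕ) (v : ℝ≥0) (B : ℕ → Ω → ℝ) (μf : ℕ → ℝ) : Prop :=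
  (∀ i, Measurable (B i)) ∧
  iIndepFun (fun i : Fin n => B i) ℙ ∧
  ∀ i < n, (ℙ : Measure Ω).map (B i) = gaussianReal (μf i) v

lemma Good.step {n : ℕ} {v : ℝ≥0} (hv : v ≠ 0) (τ : ℝ) {B : ℕ → Ω → ℝ} {μf : ℕ → ℝ}
    (hG : Good n v B μf) {j k : ℕ} (hj : j < n) (hk : k < n) (hjk : j ≠ k) :
    Good n v (rotStepRV τ j k B) (rotStep τ j k μf) := by
  obtain ⟨hm, hi, hl⟩ := hG
  set c := Real.cos τ
  set s := Real.sin τ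
  have hcs : c^2 + s^2 = 1 := by
    simpa [c, s] using Real.cos_sq_add_sin_sq τ
  have hXY : IndepFun (B j) (B k) ℙ := by
    have := hi.indepFun (i := ⟨j, hj⟩) (j := ⟨k, hk⟩) (by simp [Fin.ext_iff, hjk])
    exact this
  have hmeas : ∀ i, Measurable (rotStepRV τ j k B i) := by
    intro i
    unfold rotStepRV rotStep
    split_ifs
    · exact ((hm j).mul_const c).add ((hm k).mul_const s)
    · exact ((hm j).neg.mul_const s).add ((hm k).mul_const c)
    · exact hm i
  refine ⟨hmeas, ?_, ?_⟩
  · refine regroup (fun i : Fin n => B i) (fun i : Fin n => rotStepRV τ j k B i)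
      (fun i => hm i) hi ⟨j, hj⟩ ⟨k, hk⟩ (by simp [Fin.ext_iff, hjk])
      (fun p => p.1 * c + p.2 * s) (fun p => -p.1 * s + p.2 * c)
      (by fun_prop) (by fun_prop) ?_ ?_ ?_ ?_
    · funext ω; simp [rotStepRV, rotStep, c, s]
    · funext ω
      simp [rotStepRV, rotStep, Ne.symm hjk, c, s]
    · intro i hij hik
      have h1 : (i : ℕ) ≠ j := fun h => hij (Fin.ext h)
      have h2 : (i : ℕ) ≠ k := fun h => hik (Fin.ext h)
      funext ω
      simp [rotStepRV, rotStep, h1, h2]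
    · exact pair_rot_indep (hm j) (hm k) hXY hv (hl j hj) (hl k hk) c s hcs
  · intro i hi'
    rcases eq_or_ne i j with rfl | hij
    · have : rotStepRV τ i k B i = fun ω => B i ω * c + B k ω * s := by
        funext ω; simp [rotStepRV, rotStep, c, s]
      rw [this, pair_rot_fst_law (hm i) (hm k) hXY hv (hl i hi') (hl k hk) c s hcs]
      congr 1
      simp [rotStep, c, s]
    rcases eq_or_ne i k with rfl | hik
    · have : rotStepRV τ j i B i = fun ω => -B j ω * s + B i ω * c := by
        funext ω
        simp [rotStepRV, rotStep, Ne.symm hjk, c, s]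
      rw [this, pair_rot_snd_law (hm j) (hm i) hXY hv (hl j hj) (hl i hi') c s hcs]
      congr 1
      simp [rotStep, Ne.symm hjk, c, s]
    · have : rotStepRV τ j k B i = B i := by
        funext ω; simp [rotStepRV, rotStep, hij, hik]
      rw [this, hl i hi']
      congr 1
      simp [rotStep, hij, hik]

lemma Good.iter {n : ℕ} {v : ℝ≥0} (hv : v ≠ 0) (τ : ℝ) :
    ∀ (L : List (ℕ × ℕ)) {B : ℕ → Ω → ℝ} {μf : ℕ → ℝ},
    (∀ p ∈ L, p.1 < n ∧ p.2 < n ∧ p.1 ≠ p.2) → Good n v B μf →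
    Good n v (L.foldl (fun C p => rotStepRV τ p.1 p.2 C) B)
      (L.foldl (fun w p => rotStep τ p.1 p.2 w) μf) := by
  intro L
  induction L with
  | nil => intro B μf _ hG; exact hG
  | cons p L ih =>
    intro B μf hL hG
    simp only [List.foldl_cons]
    exact ih (fun q hq => hL q (List.mem_cons_of_mem _ hq))
      (hG.step hv τ (hL p List.mem_cons_self).1 (hL p List.mem_cons_self).2.1
        (hL p List.mem_cons_self).2.2)

lemma foldl_rotStep_comm (τ : ℝ) :
    ∀ (L : List (ℕ × ℕ)) (B : ℕ → Ω → ℝ) (ω : Ω),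
    (fun x => (L.foldl (fun C p => rotStepRV τ p.1 p.2 C) B) x ω)
      = L.foldl (fun w p => rotStep τ p.1 p.2 w) (fun x => B x ω) := by
  intro L
  induction L with
  | nil => intro B ω; rfl
  | cons p L ih =>
    intro B ω
    simp only [List.foldl_cons]
    exact ih (rotStepRV τ p.1 p.2 B) ω

end RV

def stepsList (m : ℕ) : List (ℕ × ℕ) :=
  (List.range m).flatMap fun t =>
    (List.range (2 ^ (m - (t + 1)))).map fun l => (2 ^ (t + 1) * l, 2 ^ (t + 1) * l + 2 ^ t)

lemma foldl_bind' {α β γ : Type*} (l : List α) (f : α → List β) (g : γ → β → γ) (b : γ) :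
    (l.flatMap f).foldl g b = l.foldl (fun x a => (f a).foldl g x) b := by
  induction l generalizing b with
  | nil => rfl
  | cons a l ih => simp [List.foldl_append, ih]

lemma G2_eq_foldl (m : ℕ) (v : ℕ → ℝ) :
    G2 m v = (stepsList m).foldl (fun w p => rotStep (Real.pi/4) p.1 p.2 w) v := by
  unfold G2 stepsList
  rw [foldl_bind']
  refine congrArg (fun f => List.foldl f v (List.range m)) ?_
  funext w t
  rw [List.foldl_map]

lemma stepsList_valid (m : ℕ) : ∀ p ∈ stepsList m,
    p.1 < 2 ^ m ∧ p.2 < 2 ^ m ∧ p.1 ≠ p.2 := by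
  intro p hp
  simp only [stepsList, List.mem_flatMap, List.mem_map, List.mem_range] at hp
  obtain ⟨t, ht, l, hl, rfl⟩ := hp
  have h2t : 0 < (2:ℕ) ^ t := pow_pos (by norm_num) t
  have ht1 : t + 1 ≤ m := ht
  have hkey : 2 ^ (t + 1) * l + 2 ^ t < 2 ^ m := by
    have h1 : 2 ^ (t + 1) * l + 2 ^ t < 2 ^ (t + 1) * (l + 1) := by
      rw [Nat.mul_add, Nat.mul_one]
      have : (2:ℕ) ^ t < 2 ^ (t + 1) := Nat.pow_lt_pow_right (by norm_num) (Nat.lt_succ_self t)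
      omega
    have h2 : 2 ^ (t + 1) * (l + 1) ≤ 2 ^ (t + 1) * 2 ^ (m - (t + 1)) :=
      Nat.mul_le_mul_left _ hl
    have h3 : 2 ^ (t + 1) * 2 ^ (m - (t + 1)) = 2 ^ m := by
      rw [← pow_add, Nat.add_sub_cancel' ht1]
    omega
  refine ⟨by omega, hkey, by omega⟩

/-- the mean vector after the first `t` stages -/
noncomputable def wvec (m : ℕ) (θ : ℝ) (t : ℕ) : ℕ → ℝ := fun i =>
  if 2 ^ m ≤ i then θ else if 2 ^ t ∣ i then (Real.sqrt 2) ^ t * θ else 0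


lemma rot_update (m t : ℕ) (θ : ℝ) (htm : t + 1 ≤ m) (q : ℕ) (hq : q + 1 ≤ 2 ^ (m - (t + 1)))
    (j k : ℕ) (hj : j = 2 ^ (t + 1) * q) (hk : k = 2 ^ (t + 1) * q + 2 ^ t) (i : ℕ) :
    rotStep (Real.pi / 4) j k
        (fun x => if x < 2 ^ (t + 1) * q then wvec m θ (t + 1) x else wvec m θ t x) i
      = if i < 2 ^ (t + 1) * (q + 1) then wvec m θ (t + 1) i else wvec m θ t i := by
  have h2t : 0 < (2:ℕ) ^ t := pow_pos (by norm_num) t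
  have h2t1 : (2:ℕ) ^ t < 2 ^ (t + 1) := Nat.pow_lt_pow_right (by norm_num) (Nat.lt_succ_self t)
  have h3 : 2 ^ (t + 1) * 2 ^ (m - (t + 1)) = 2 ^ m := by
    rw [← pow_add, Nat.add_sub_cancel' htm]
  have hQ : 2 ^ (t + 1) * (q + 1) ≤ 2 ^ m := by
    calc 2 ^ (t + 1) * (q + 1) ≤ 2 ^ (t + 1) * 2 ^ (m - (t + 1)) := Nat.mul_le_mul_left _ hq
    _ = 2 ^ m := h3
  have hmul : 2 ^ (t + 1) * (q + 1) = 2 ^ (t + 1) * q + 2 ^ (t + 1) := by ring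
  have hkm : k < 2 ^ m := by omega
  have hjm : j < 2 ^ m := by omega
  have hcos : Real.cos (Real.pi / 4) = Real.sqrt 2 / 2 := Real.cos_pi_div_four
  have hsin : Real.sin (Real.pi / 4) = Real.sqrt 2 / 2 := Real.sin_pi_div_four
  have hjlt : ¬ j < 2 ^ (t + 1) * q := by omega
  have hklt : ¬ k < 2 ^ (t + 1) * q := by omega
  have hwj : wvec m θ t j = (Real.sqrt 2) ^ t * θ := by
    rw [wvec, if_neg (by omega), if_pos ⟨2 * q, by rw [hj]; ring⟩]
  have hwk : wvec m θ t k = (Real.sqrt 2) ^ t * θ := by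
    rw [wvec, if_neg (by omega), if_pos ⟨2 * q + 1, by rw [hk]; ring⟩]
  rcases eq_or_ne i j with rfl | hij
  · rw [rotStep, if_pos rfl]
    simp only [hjlt, if_false, hklt]
    rw [hwj, hwk, hcos, hsin, if_pos (by omega), wvec, if_neg (by omega),
      if_pos ⟨q, hj⟩, pow_succ]
    have h2 : Real.sqrt 2 * Real.sqrt 2 = 2 := Real.mul_self_sqrt (by norm_num)
    field_simp
    ring
  rcases eq_or_ne i k with rfl | hik
  · rw [rotStep, if_neg (by omega), if_pos rfl]
    simp only [hjlt, if_false, hklt]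
    rw [hwj, hwk, hcos, hsin]
    have hndvd : ¬ 2 ^ (t + 1) ∣ i := by
      rintro ⟨d, hd⟩
      rcases Nat.lt_or_ge d (q + 1) with h | h
      · have hdq : d ≤ q := by omega
        have := Nat.mul_le_mul_left (2 ^ (t + 1)) hdq
        omega
      · have := Nat.mul_le_mul_left (2 ^ (t + 1)) h
        omega
    rw [if_pos (by omega), wvec, if_neg (by omega), if_neg hndvd]
    ring
  · rw [rotStep, if_neg hij, if_neg hik]
    rcases Nat.lt_or_ge i (2 ^ (t + 1) * q) with h | h
    · rw [if_pos h, if_pos (by omega)]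
    · rw [if_neg (by omega)]
      rcases Nat.lt_or_ge i (2 ^ (t + 1) * (q + 1)) with h2 | h2
      · rw [if_pos h2]
        have him : i < 2 ^ m := by omega
        have hnd0 : ¬ 2 ^ t ∣ i := by
          rintro ⟨d, hd⟩
          have hd1 : 2 * q ≤ d := by
            by_contra hcon
            push_neg at hcon
            have hdq : d + 1 ≤ 2 * q := by omega
            have hmle := Nat.mul_le_mul_left (2 ^ t) hdq
            have hexp : 2 ^ t * (d + 1) = 2 ^ t * d + 2 ^ t := by ring
            have heq : 2 ^ (t + 1) * q = 2 ^ t * (2 * q) := by ring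
            omega
          have hd2 : d < 2 * (q + 1) := by
            by_contra hcon
            push_neg at hcon
            have := Nat.mul_le_mul_left (2 ^ t) hcon
            have heq : 2 ^ (t + 1) * (q + 1) = 2 ^ t * (2 * (q + 1)) := by ring
            omega
          have hd3 : d = 2 * q ∨ d = 2 * q + 1 := by omega
          rcases hd3 with rfl | rfl
          · exact hij (by rw [hd, hj]; ring)
          · exact hik (by rw [hd, hk]; ring)
        have hnd1 : ¬ 2 ^ (t + 1) ∣ i := fun hdvd => hnd0 (dvd_trans ⟨2, by ring⟩ hdvd)
        simp [wvec, Nat.not_le.mpr him, hnd0, hnd1]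
      · rw [if_neg (by omega)]

lemma inner_fold_eval (m : ℕ) (θ : ℝ) (t : ℕ) (htm : t + 1 ≤ m) :
    ∀ q, q ≤ 2 ^ (m - (t + 1)) →
    (List.range q).foldl
        (fun (u : ℕ → ℝ) (l : ℕ) =>
          rotStep (Real.pi / 4) (2 ^ (t + 1) * l) (2 ^ (t + 1) * l + 2 ^ t) u)
        (wvec m θ t)
      = fun i => if i < 2 ^ (t + 1) * q then wvec m θ (t + 1) i else wvec m θ t i := by
  intro q
  induction q with
  | zero => intro _; funext i; simp
  | succ q ih =>
    intro hq
    rw [List.range_succ, List.foldl_append, List.foldl_cons, List.foldl_nil,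
      ih (Nat.le_of_succ_le hq)]
    funext i
    exact rot_update m t θ htm q hq _ _ rfl rfl i

lemma outer_fold_eval (m : ℕ) (θ : ℝ) :
    ∀ t, t ≤ m →
    (List.range t).foldl
        (fun (w : ℕ → ℝ) (t' : ℕ) =>
          (List.range (2 ^ (m - (t' + 1)))).foldl
            (fun (u : ℕ → ℝ) (l : ℕ) =>
              rotStep (Real.pi / 4) (2 ^ (t' + 1) * l) (2 ^ (t' + 1) * l + 2 ^ t') u) w)
        (fun _ => θ)
      = wvec m θ t := by
  intro t
  induction t with
  | zero =>
    intro _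
    funext i
    simp [wvec]
  | succ t ih =>
    intro ht
    rw [List.range_succ, List.foldl_append, List.foldl_cons, List.foldl_nil,
      ih (Nat.le_of_succ_le ht), inner_fold_eval m θ t ht _ le_rfl]
    funext i
    have h3 : 2 ^ (t + 1) * 2 ^ (m - (t + 1)) = 2 ^ m := by
      rw [← pow_add, Nat.add_sub_cancel' ht]
    rw [h3]
    rcases Nat.lt_or_ge i (2 ^ m) with h | h
    · rw [if_pos h]
    · rw [if_neg (by omega), wvec, wvec, if_pos h, if_pos h]

lemma G2_const (m : ℕ) (θ : ℝ) : G2 m (fun _ => θ) = wvec m θ m := by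
  rw [G2]
  exact outer_fold_eval m θ m le_rfl

lemma sqrt_two_pow_eq (m : ℕ) : (Real.sqrt 2) ^ m = Real.sqrt (2 ^ m) := by
  induction m with
  | zero => simp
  | succ n ih => rw [pow_succ, pow_succ, Real.sqrt_mul (by positivity), ih]

end Aux

/-- applying `G₂` to `n = 2^m` i.i.d. `N(θ, ν/2)` amplitudes yields independent
amplitudes, the first distributed `N(√n θ, ν/2)` and the others `N(0, ν/2)`. -/
theorem statement4
    {Ω : Type} [MeasureSpace Ω] [IsProbabilityMeasure (ℙ : Measure Ω)]
    (m : ℕ) (hm : 1 ≤ m) (θ ν : ℝ) (hν : 0 < ν)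
    (A : ℕ → Ω → ℝ) (hAmeas : ∀ i, Measurable (A i))
    (hindep : iIndepFun (fun i : Fin (2 ^ m) => A i) ℙ)
    (hlaw : ∀ i < 2 ^ m,
      (ℙ : Measure Ω).map (A i) = gaussianReal θ (Real.toNNReal (ν / 2))) :
    iIndepFun
      (fun (i : Fin (2 ^ m)) (ω : Ω) => G2 m (fun j => A j ω) i) ℙ
    ∧ (ℙ : Measure Ω).map (fun ω => G2 m (fun j => A j ω) 0)
        = gaussianReal (Real.sqrt (2 ^ m) * θ) (Real.toNNReal (ν / 2))
    ∧ ∀ i, 1 ≤ i → i < 2 ^ m →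
        (ℙ : Measure Ω).map (fun ω => G2 m (fun j => A j ω) i)
          = gaussianReal 0 (Real.toNNReal (ν / 2)) := by
  classical
  set v : ℝ≥0 := Real.toNNReal (ν / 2) with hvdef
  have hv : v ≠ 0 := by
    simp only [hvdef, ne_eq, Real.toNNReal_eq_zero, not_le]
    linarith
  have hGood : Good (2 ^ m) v A (fun _ => θ) := ⟨hAmeas, hindep, fun i hi => hlaw i hi⟩
  obtain ⟨hBm, hBi, hBl⟩ :=
    Good.iter hv (Real.pi / 4) (stepsList m) (stepsList_valid m) hGood
  have hmeans : (stepsList m).foldl (fun w p => rotStep (Real.pi/4) p.1 p.2 w) (fun _ => θ)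
      = wvec m θ m := by
    rw [← G2_eq_foldl]
    exact G2_const m θ
  have hkey : ∀ i : ℕ, (fun ω => G2 m (fun j => A j ω) i)
      = ((stepsList m).foldl (fun C p => rotStepRV (Real.pi/4) p.1 p.2 C) A) i := by
    intro i
    funext ω
    have hcomm := foldl_rotStep_comm (Real.pi/4) (stepsList m) A ω
    calc G2 m (fun j => A j ω) i
        = ((stepsList m).foldl (fun w p => rotStep (Real.pi/4) p.1 p.2 w) (fun j => A j ω)) i := by
          rw [G2_eq_foldl]
      _ = _ := by rw [← hcomm]
  have hpow : 0 < 2 ^ m := pow_pos (by norm_num) m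
  refine ⟨?_, ?_, ?_⟩
  · have heq : (fun (i : Fin (2 ^ m)) (ω : Ω) => G2 m (fun j => A j ω) i)
        = (fun (i : Fin (2 ^ m)) =>
            ((stepsList m).foldl (fun C p => rotStepRV (Real.pi/4) p.1 p.2 C) A) i) :=
      funext fun i => hkey i
    rw [heq]
    exact hBi
  · rw [hkey 0, hBl 0 hpow, hmeans]
    have hw0 : wvec m θ m 0 = Real.sqrt (2 ^ m) * θ := by
      rw [wvec, if_neg (Nat.not_le.mpr hpow), if_pos (dvd_zero _), sqrt_two_pow_eq]
    rw [hw0]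
  · intro i h1 h2
    rw [hkey i, hBl i h2, hmeans]
    have hwi : wvec m θ m i = 0 := by
      rw [wvec, if_neg (by omega), if_neg ?_]
      intro hdvd
      exact absurd (Nat.le_of_dvd (by omega) hdvd) (by omega)
    rw [hwi]
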